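/- Let x > 1 be a real number that is not an integer, and let σ ≥ 1, ε ∈ (0,1), T > 1. Suppose Λ' : ℕ → ℂ satisfies |Λ'(n)| ≤ n^{σ-1+ε/2} for all n ≥ 1. Then ∑_{n ≥ 1, n ≠ x} |Λ'(n)| (x/n)^{σ+ε} min{T, |log(x/n)|^{-1}} ≪ x^{σ+ε} + x^{σ+ε/2} min{T/x, 1/‖x‖}, where ‖x‖ denotes the distance from x to the nearest integer, and the implied constant depends only on σ and ε. -/

import Mathlib

open Finset

/-- Distance from a real number to the nearest integer. -/
noncomputable def distNearestInt (x : ℝ) : ℝ := |x - (round x : ℝ)|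

private lemma log_div_lower {a b : ℝ} (ha : 0 < a) (hab : a ≤ b) :
    (b - a) / b ≤ Real.log (b / a) := by
  have hb : 0 < b := lt_of_lt_of_le ha hab
  have h := Real.log_le_sub_one_of_pos (x := a / b) (by positivity)
  have h2 : Real.log (b / a) = - Real.log (a / b) := by
    rw [← Real.log_inv]
    congr 1
    field_simp
  rw [h2]
  have h3 : (b - a)/b = -(a/b - 1) := by field_simp; ring
  rw [h3]
  linarith

private lemma abs_log_div_lower {x n : ℝ} (hx : 0 < x) (hn : 0 < n) (h2 : n ≤ 2 * x) :
    |x - n| / (2 * x) ≤ |Real.log (x / n)| := by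
  rcases le_total n x with h | h
  · have h1 : (x - n)/x ≤ Real.log (x / n) := log_div_lower hn h
    have habs : |x - n| = x - n := abs_of_nonneg (by linarith)
    rw [habs]
    refine le_trans ?_ (le_trans h1 (le_abs_self _))
    gcongr
    all_goals linarith
  · have h1 : (n - x)/n ≤ Real.log (n / x) := log_div_lower hx h
    have hlog : |Real.log (x/n)| = |Real.log (n/x)| := by
      rw [show x/n = (n/x)⁻¹ from by rw [inv_div], Real.log_inv, abs_neg]
    have habs : |x - n| = n - x := by rw [abs_sub_comm]; exact abs_of_nonneg (by linarith)
    rw [habs, hlog]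
    refine le_trans ?_ (le_trans h1 (le_abs_self _))
    gcongr
    all_goals linarith

private lemma nat_dist_cast (n r : ℕ) : ((Nat.dist n r : ℕ) : ℝ) = |(n:ℝ) - (r:ℝ)| := by
  rcases le_total n r with h | h
  · rw [Nat.dist_eq_sub_of_le h, abs_sub_comm, abs_of_nonneg (by exact_mod_cast sub_nonneg.mpr (by exact_mod_cast h : (n:ℝ) ≤ r))]
    push_cast [h]
    ring
  · rw [Nat.dist_eq_sub_of_le_right h, abs_of_nonneg (by exact_mod_cast sub_nonneg.mpr (by exact_mod_cast h : (r:ℝ) ≤ n))]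
    push_cast [h]
    ring

set_option maxHeartbeats 1600000 in
theorem landau_sum_bound (σ ε : ℝ) (hσ : 1 ≤ σ) (hε0 : 0 < ε) (hε1 : ε < 1) :
    ∃ C : ℝ, 0 < C ∧
      ∀ (x T : ℝ) (Λ' : ℕ → ℂ), 1 < x → (¬ ∃ m : ℤ, x = (m : ℝ)) → 1 < T →
        (∀ n : ℕ, 1 ≤ n → ‖Λ' n‖ ≤ (n : ℝ) ^ (σ - 1 + ε / 2)) →
        (Summable fun n : {n : ℕ // 1 ≤ n} =>
            ‖Λ' n‖ * (x / (n : ℝ)) ^ (σ + ε)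
              * min T (|Real.log (x / (n : ℝ))|⁻¹)) ∧
        (∑' n : {n : ℕ // 1 ≤ n},
            ‖Λ' n‖ * (x / (n : ℝ)) ^ (σ + ε)
              * min T (|Real.log (x / (n : ℝ))|⁻¹))
          ≤ C * (x ^ (σ + ε) + x ^ (σ + ε / 2) * min (T / x) (distNearestInt x)⁻¹) := by
  have hp₁ : 1 < 1 + ε/2 := by linarith
  have hp₂ : 1 < 1 + ε/4 := by linarith
  have hZ₁sum : Summable (fun n : ℕ => ((n:ℝ) ^ (1 + ε/2))⁻¹) :=
    Real.summable_nat_rpow_inv.mpr hp₁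
  have hZ₂sum : Summable (fun n : ℕ => ((n:ℝ) ^ (1 + ε/4))⁻¹) :=
    Real.summable_nat_rpow_inv.mpr hp₂
  set Z₁ := ∑' n : ℕ, ((n:ℝ) ^ (1 + ε/2))⁻¹ with hZ₁def
  set Z₂ := ∑' n : ℕ, ((n:ℝ) ^ (1 + ε/4))⁻¹ with hZ₂def
  have hZ₁0 : 0 ≤ Z₁ := tsum_nonneg fun n => by positivity
  have hZ₂0 : 0 ≤ Z₂ := tsum_nonneg fun n => by positivity
  refine ⟨2*Z₁ + 96*Z₂ + 8, by linarith, ?_⟩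
  intro x T Λ' hx hxZ hT hΛ
  have hx0 : (0:ℝ) < x := by linarith
  set r0 : ℤ := round x with hr0def
  have hround : |x - (r0:ℝ)| ≤ 1/2 := abs_sub_round x
  have hd0 : 0 < distNearestInt x := by
    rw [distNearestInt]
    rcases eq_or_ne x ((round x : ℤ):ℝ) with h | h
    · exact absurd ⟨round x, h⟩ hxZ
    · exact abs_pos.mpr (sub_ne_zero.mpr h)
  have hdle : distNearestInt x ≤ 1/2 := hround
  have hround' := abs_le.mp hround
  have hr0_1 : 1 ≤ r0 := by
    by_contra h
    push_neg at h
    have h1 : r0 ≤ 0 := by omega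
    have h2 : (r0:ℝ) ≤ 0 := by exact_mod_cast h1
    linarith [hround'.2]
  set r : ℕ := r0.toNat with hrdef
  have hrcastZ : ((r:ℕ):ℤ) = r0 := Int.toNat_of_nonneg (by omega)
  have hrcast : (r:ℝ) = (r0:ℝ) := by exact_mod_cast congrArg (Int.cast : ℤ → ℝ) hrcastZ
  have hr1 : 1 ≤ r := by omega
  have hrx1 : x - 1/2 ≤ (r:ℝ) := by rw [hrcast]; linarith [hround'.2]
  have hrx2 : (r:ℝ) ≤ x + 1/2 := by rw [hrcast]; linarith [hround'.1]
  have hrhalf : x/2 ≤ (r:ℝ) := by linarith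
  have hr2x : (r:ℝ) ≤ 2*x := by linarith
  have hdist : distNearestInt x = |x - (r:ℝ)| := by rw [distNearestInt, hrcast, hr0def]
  -- helper: inverse rpow bound for y ≥ x/2
  have h2pow : (2:ℝ) ^ ((1:ℝ)+ε/2) ≤ 4 := by
    have h := Real.rpow_le_rpow_of_exponent_le (x := 2) (by norm_num)
      (show (1:ℝ)+ε/2 ≤ 2 by linarith)
    calc (2:ℝ)^((1:ℝ)+ε/2) ≤ (2:ℝ)^(2:ℝ) := h
      _ = 4 := by
        rw [show (2:ℝ) = ((2:ℕ):ℝ) by norm_num, Real.rpow_natCast]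
        norm_num
  have hinvp₁ : ∀ y : ℝ, x/2 ≤ y → (y ^ (1+ε/2))⁻¹ ≤ 4 * (x ^ (1+ε/2))⁻¹ := by
    intro y hy
    have hy0 : 0 < y := lt_of_lt_of_le (by linarith) hy
    have h1 : (x/2) ^ (1+ε/2) ≤ y ^ (1+ε/2) :=
      Real.rpow_le_rpow (by positivity) hy (by linarith)
    have h2 : x ^ (1+ε/2) / 4 ≤ (x/2) ^ (1+ε/2) := by
      rw [Real.div_rpow hx0.le (by norm_num)]
      gcongr
      all_goals first | exact h2pow | exact Real.rpow_nonneg hx0.le _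
    have h3 : x ^ (1+ε/2) / 4 ≤ y ^ (1+ε/2) := le_trans h2 h1
    have h4 := inv_anti₀ (by positivity) h3
    rw [inv_div] at h4
    calc (y ^ (1+ε/2))⁻¹ ≤ 4 / x ^ (1+ε/2) := h4
      _ = 4 * (x ^ (1+ε/2))⁻¹ := div_eq_mul_inv _ _
  have hxx : x^(σ+ε) * (x^(1+ε/2))⁻¹ * x = x^(σ+ε/2) := by
    rw [← Real.rpow_neg hx0.le, ← Real.rpow_add hx0, ← Real.rpow_add_one hx0.ne']
    congr 1
    ring
  -- pointwise bound
  have key : ∀ n : ℕ, 1 ≤ n →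
      ‖Λ' n‖ * (x / (n:ℝ)) ^ (σ + ε) * min T (|Real.log (x / (n:ℝ))|⁻¹)
        ≤ 2 * x^(σ+ε) * (((n:ℕ):ℝ)^(1+ε/2))⁻¹
          + 48 * x^(σ+ε) * ((Nat.dist n r : ℝ)^(1+ε/4))⁻¹
          + (if n = r then 8 * x^(σ+ε/2) * min (T/x) (distNearestInt x)⁻¹ else 0) := by
    intro n hn
    have hn0 : (0:ℝ) < n := by exact_mod_cast hn
    have hlog0 : (0:ℝ) ≤ |Real.log (x / (n:ℝ))|⁻¹ := by positivity
    have hm0 : 0 ≤ min T (|Real.log (x / (n:ℝ))|⁻¹) := le_min (by linarith) hlog0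
    have hg1n0 : 0 ≤ 2 * x^(σ+ε) * (((n:ℕ):ℝ)^(1+ε/2))⁻¹ := by positivity
    have hg2n0 : 0 ≤ 48 * x^(σ+ε) * ((Nat.dist n r : ℝ)^(1+ε/4))⁻¹ := by positivity
    have hprod : ‖Λ' n‖ * (x/(n:ℝ))^(σ+ε) ≤ x^(σ+ε) * (((n:ℝ))^(1+ε/2))⁻¹ := by
      have h1 := hΛ n hn
      have hdiv : (x/(n:ℝ))^(σ+ε) = x^(σ+ε) * (((n:ℝ))^(σ+ε))⁻¹ := by
        rw [Real.div_rpow hx0.le hn0.le, div_eq_mul_inv]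
      have h2 : (n:ℝ)^(σ-1+ε/2) * (((n:ℝ))^(σ+ε))⁻¹ = (((n:ℝ))^(1+ε/2))⁻¹ := by
        rw [← Real.rpow_neg hn0.le, ← Real.rpow_add hn0, ← Real.rpow_neg hn0.le]
        congr 1
        ring
      calc ‖Λ' n‖ * (x/(n:ℝ))^(σ+ε)
          = ‖Λ' n‖ * (x^(σ+ε) * (((n:ℝ))^(σ+ε))⁻¹) := by rw [hdiv]
        _ ≤ (n:ℝ)^(σ-1+ε/2) * (x^(σ+ε) * (((n:ℝ))^(σ+ε))⁻¹) :=
            mul_le_mul_of_nonneg_right h1 (by positivity)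
        _ = x^(σ+ε) * ((n:ℝ)^(σ-1+ε/2) * (((n:ℝ))^(σ+ε))⁻¹) := by ring
        _ = x^(σ+ε) * (((n:ℝ))^(1+ε/2))⁻¹ := by rw [h2]
    have hbase : ‖Λ' n‖ * (x/(n:ℝ))^(σ+ε) * min T (|Real.log (x / (n:ℝ))|⁻¹)
        ≤ x^(σ+ε) * (((n:ℝ))^(1+ε/2))⁻¹ * min T (|Real.log (x / (n:ℝ))|⁻¹) :=
      mul_le_mul_of_nonneg_right hprod hm0
    by_cases hnr : n = r
    · -- n is the nearest integer
      rw [if_pos hnr]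
      have hncast : (n:ℝ) = (r:ℝ) := by rw [hnr]
      have hlow : distNearestInt x / (2*x) ≤ |Real.log (x / (n:ℝ))| := by
        rw [hdist, hncast]
        exact abs_log_div_lower hx0 (by rw [← hncast]; exact hn0) hr2x
      have hlowpos : 0 < distNearestInt x / (2*x) := by positivity
      have hinv : |Real.log (x / (n:ℝ))|⁻¹ ≤ 2*x / distNearestInt x := by
        have h := inv_anti₀ hlowpos hlow
        rwa [inv_div] at h
      have hmle : min T (|Real.log (x / (n:ℝ))|⁻¹) ≤ 2*x*min (T/x) (distNearestInt x)⁻¹ := by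
        have e1 : 2*x*min (T/x) (distNearestInt x)⁻¹
            = min (2*x*(T/x)) (2*x*(distNearestInt x)⁻¹) := mul_min_of_nonneg _ _ (by positivity)
        have e2 : 2*x*(T/x) = 2*T := by field_simp
        have e3 : 2*x*(distNearestInt x)⁻¹ = 2*x/(distNearestInt x) := by rw [div_eq_mul_inv]
        calc min T (|Real.log (x / (n:ℝ))|⁻¹) ≤ min (2*T) (2*x/distNearestInt x) :=
              min_le_min (by linarith) hinv
          _ = 2*x*min (T/x) (distNearestInt x)⁻¹ := by rw [e1, e2, e3]
      calc ‖Λ' n‖ * (x/(n:ℝ))^(σ+ε) * min T (|Real.log (x / (n:ℝ))|⁻¹)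
          ≤ x^(σ+ε) * (((n:ℝ))^(1+ε/2))⁻¹ * min T (|Real.log (x / (n:ℝ))|⁻¹) := hbase
        _ ≤ x^(σ+ε) * (4 * (x^(1+ε/2))⁻¹) * (2*x*min (T/x) (distNearestInt x)⁻¹) := by
            apply mul_le_mul
            · exact mul_le_mul_of_nonneg_left (hinvp₁ _ (by rw [hncast]; exact hrhalf))
                (by positivity)
            · exact hmle
            · exact hm0
            · positivity
        _ = 8 * x^(σ+ε/2) * min (T/x) (distNearestInt x)⁻¹ := by
            calc x^(σ+ε) * (4 * (x^(1+ε/2))⁻¹) * (2*x*min (T/x) (distNearestInt x)⁻¹)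
                = 8 * (x^(σ+ε) * (x^(1+ε/2))⁻¹ * x) * min (T/x) (distNearestInt x)⁻¹ := by ring
              _ = 8 * x^(σ+ε/2) * min (T/x) (distNearestInt x)⁻¹ := by rw [hxx]
        _ ≤ 2 * x^(σ+ε) * (((n:ℕ):ℝ)^(1+ε/2))⁻¹ + 48 * x^(σ+ε) * ((Nat.dist n r : ℝ)^(1+ε/4))⁻¹
              + 8 * x^(σ+ε/2) * min (T/x) (distNearestInt x)⁻¹ := by linarith
    · rw [if_neg hnr]
      by_cases hfar1 : 2*(n:ℝ) ≤ x
      · -- n ≤ x/2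
        have hy : (2:ℝ) ≤ x/(n:ℝ) := (le_div_iff₀ hn0).mpr (by linarith)
        have h1 : Real.log 2 ≤ Real.log (x/(n:ℝ)) := Real.log_le_log (by norm_num) hy
        have hhalf : 1/2 ≤ |Real.log (x/(n:ℝ))| :=
          le_trans (by linarith [Real.log_two_gt_d9]) (le_trans h1 (le_abs_self _))
        have hm2 : min T (|Real.log (x / (n:ℝ))|⁻¹) ≤ 2 := by
          have h := inv_anti₀ (by norm_num : (0:ℝ) < 1/2) hhalf
          norm_num at h
          exact le_trans (min_le_right _ _) h
        have ht : ‖Λ' n‖ * (x/(n:ℝ))^(σ+ε) * min T (|Real.log (x / (n:ℝ))|⁻¹)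
            ≤ 2 * x^(σ+ε) * (((n:ℕ):ℝ)^(1+ε/2))⁻¹ := by
          calc ‖Λ' n‖ * (x/(n:ℝ))^(σ+ε) * min T (|Real.log (x / (n:ℝ))|⁻¹)
              ≤ (x^(σ+ε) * (((n:ℝ))^(1+ε/2))⁻¹) * 2 := by
                apply mul_le_mul hprod hm2 hm0 (by positivity)
            _ = 2 * x^(σ+ε) * (((n:ℕ):ℝ)^(1+ε/2))⁻¹ := by ring
        linarith
      · by_cases hfar2 : 2*x ≤ (n:ℝ)
        · -- n ≥ 2x
          have hy : x/(n:ℝ) ≤ 1/2 := by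
            rw [div_le_iff₀ hn0]
            linarith
          have h1 : Real.log (x/(n:ℝ)) ≤ Real.log (1/2) := Real.log_le_log (by positivity) hy
          have h2 : Real.log ((1:ℝ)/2) = -Real.log 2 := by rw [one_div, Real.log_inv]
          have hhalf : 1/2 ≤ |Real.log (x/(n:ℝ))| := by
            have h3 : 1/2 ≤ -Real.log (x/(n:ℝ)) := by
              rw [h2] at h1
              linarith [Real.log_two_gt_d9]
            linarith [neg_le_abs (Real.log (x/(n:ℝ)))]
          have hm2 : min T (|Real.log (x / (n:ℝ))|⁻¹) ≤ 2 := by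
            have h := inv_anti₀ (by norm_num : (0:ℝ) < 1/2) hhalf
            norm_num at h
            exact le_trans (min_le_right _ _) h
          have ht : ‖Λ' n‖ * (x/(n:ℝ))^(σ+ε) * min T (|Real.log (x / (n:ℝ))|⁻¹)
              ≤ 2 * x^(σ+ε) * (((n:ℕ):ℝ)^(1+ε/2))⁻¹ := by
            calc ‖Λ' n‖ * (x/(n:ℝ))^(σ+ε) * min T (|Real.log (x / (n:ℝ))|⁻¹)
                ≤ (x^(σ+ε) * (((n:ℝ))^(1+ε/2))⁻¹) * 2 := by
                  apply mul_le_mul hprod hm2 hm0 (by positivity)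
              _ = 2 * x^(σ+ε) * (((n:ℕ):ℝ)^(1+ε/2))⁻¹ := by ring
          linarith
        · -- middle range x/2 < n < 2x
          push_neg at hfar1 hfar2
          have hk1 : 1 ≤ Nat.dist n r := by
            rcases Nat.eq_zero_or_pos (Nat.dist n r) with h | h
            · exact absurd (Nat.eq_of_dist_eq_zero h) hnr
            · exact h
          have hkcast : ((Nat.dist n r : ℕ):ℝ) = |(n:ℝ) - (r:ℝ)| := nat_dist_cast n r
          have hk1' : (1:ℝ) ≤ (Nat.dist n r : ℝ) := by exact_mod_cast hk1
          have hxr : |x - (r:ℝ)| ≤ 1/2 := by rw [← hdist]; exact hdle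
          have htri : ((Nat.dist n r : ℕ):ℝ) ≤ |x - (n:ℝ)| + 1/2 := by
            rw [hkcast]
            calc |(n:ℝ) - (r:ℝ)| ≤ |(n:ℝ) - x| + |x - (r:ℝ)| := abs_sub_le _ _ _
              _ ≤ |x - (n:ℝ)| + 1/2 := by rw [abs_sub_comm]; linarith
          have habsn : ((Nat.dist n r : ℕ):ℝ)/2 ≤ |x - (n:ℝ)| := by linarith
          have habs0 : 0 < |x - (n:ℝ)| := by linarith
          have hlow : |x - (n:ℝ)|/(2*x) ≤ |Real.log (x/(n:ℝ))| :=
            abs_log_div_lower hx0 hn0 (by linarith)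
          have hinv : |Real.log (x/(n:ℝ))|⁻¹ ≤ 2*x/|x - (n:ℝ)| := by
            have h := inv_anti₀ (by positivity) hlow
            rwa [inv_div] at h
          have hinv2 : |Real.log (x/(n:ℝ))|⁻¹ ≤ 4*x/((Nat.dist n r : ℕ):ℝ) := by
            refine le_trans hinv ?_
            have hkh : (0:ℝ) < ((Nat.dist n r : ℕ):ℝ)/2 := by linarith
            have hstep : 2*x/|x - (n:ℝ)| ≤ 2*x/(((Nat.dist n r : ℕ):ℝ)/2) :=
              div_le_div_of_nonneg_left (by positivity) hkh habsn
            have heq : 2*x/(((Nat.dist n r : ℕ):ℝ)/2) = 4*x/((Nat.dist n r : ℕ):ℝ) := by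
              rw [div_div_eq_mul_div]
              ring_nf
            rw [heq] at hstep
            exact hstep
          have hm4 : min T (|Real.log (x / (n:ℝ))|⁻¹) ≤ 4*x/((Nat.dist n r : ℕ):ℝ) :=
            le_trans (min_le_right _ _) hinv2
          have habsx : |x - (n:ℝ)| ≤ x := by
            rw [abs_le]
            constructor <;> linarith
          have hk2x : ((Nat.dist n r : ℕ):ℝ) ≤ 2*x := by linarith
          have hk0 : (0:ℝ) < ((Nat.dist n r : ℕ):ℝ) := by linarith
          have hkp : ((Nat.dist n r : ℕ):ℝ)^(1+ε/4) ≤ 2 * x^(ε/4) * ((Nat.dist n r : ℕ):ℝ) := by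
            have e1 : ((Nat.dist n r : ℕ):ℝ)^(1+ε/4)
                = ((Nat.dist n r : ℕ):ℝ) * ((Nat.dist n r : ℕ):ℝ)^(ε/4) := by
              rw [Real.rpow_add hk0, Real.rpow_one]
            have e2 : ((Nat.dist n r : ℕ):ℝ)^(ε/4) ≤ (2*x)^(ε/4) :=
              Real.rpow_le_rpow hk0.le hk2x (by positivity)
            have e3 : ((2:ℝ)*x)^(ε/4) = 2^(ε/4) * x^(ε/4) := Real.mul_rpow (by norm_num) hx0.le
            have e4 : (2:ℝ)^(ε/4) ≤ 2 := by
              calc (2:ℝ)^(ε/4) ≤ (2:ℝ)^(1:ℝ) :=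
                    Real.rpow_le_rpow_of_exponent_le (by norm_num) (by linarith)
                _ = 2 := Real.rpow_one 2
            have e5 : ((Nat.dist n r : ℕ):ℝ)^(ε/4) ≤ 2 * x^(ε/4) := by
              refine le_trans e2 ?_
              rw [e3]
              have h9 : (0:ℝ) ≤ x^(ε/4) := Real.rpow_nonneg hx0.le _
              exact mul_le_mul_of_nonneg_right e4 h9
            calc ((Nat.dist n r : ℕ):ℝ)^(1+ε/4)
                = ((Nat.dist n r : ℕ):ℝ) * ((Nat.dist n r : ℕ):ℝ)^(ε/4) := e1
              _ ≤ ((Nat.dist n r : ℕ):ℝ) * (2 * x^(ε/4)) :=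
                  mul_le_mul_of_nonneg_left e5 hk0.le
              _ = 2 * x^(ε/4) * ((Nat.dist n r : ℕ):ℝ) := by ring
          have hkinv : (((Nat.dist n r : ℕ):ℝ))⁻¹
              ≤ 2 * x^(ε/4) * (((Nat.dist n r : ℕ):ℝ)^(1+ε/4))⁻¹ := by
            have h6 := inv_anti₀ (by positivity : (0:ℝ) < ((Nat.dist n r : ℕ):ℝ)^(1+ε/4)) hkp
            have hx4 : (0:ℝ) < x^(ε/4) := Real.rpow_pos_of_pos hx0 _
            have h7 : 2 * x^(ε/4) * (2 * x^(ε/4) * ((Nat.dist n r : ℕ):ℝ))⁻¹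
                = (((Nat.dist n r : ℕ):ℝ))⁻¹ := by
              rw [mul_inv]
              field_simp
            calc (((Nat.dist n r : ℕ):ℝ))⁻¹
                = 2 * x^(ε/4) * (2 * x^(ε/4) * ((Nat.dist n r : ℕ):ℝ))⁻¹ := h7.symm
              _ ≤ 2 * x^(ε/4) * (((Nat.dist n r : ℕ):ℝ)^(1+ε/4))⁻¹ :=
                  mul_le_mul_of_nonneg_left h6 (by positivity)
          have hchain : ‖Λ' n‖ * (x/(n:ℝ))^(σ+ε) * min T (|Real.log (x / (n:ℝ))|⁻¹)
              ≤ x^(σ+ε) * (4*(x^(1+ε/2))⁻¹) * (4*x/((Nat.dist n r : ℕ):ℝ)) := by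
            refine le_trans hbase ?_
            apply mul_le_mul
            · exact mul_le_mul_of_nonneg_left (hinvp₁ (n:ℝ) (by linarith)) (by positivity)
            · exact hm4
            · exact hm0
            · positivity
          have hfinal : x^(σ+ε) * (4*(x^(1+ε/2))⁻¹) * (4*x/((Nat.dist n r : ℕ):ℝ))
              ≤ 48 * x^(σ+ε) * (((Nat.dist n r : ℕ):ℝ)^(1+ε/4))⁻¹ := by
            have e8 : x^(σ+ε) * (4*(x^(1+ε/2))⁻¹) * (4*x/((Nat.dist n r : ℕ):ℝ))
                = 16 * (x^(σ+ε) * (x^(1+ε/2))⁻¹ * x) * (((Nat.dist n r : ℕ):ℝ))⁻¹ := by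
              rw [div_eq_mul_inv]
              ring
            rw [e8, hxx]
            calc 16 * x^(σ+ε/2) * (((Nat.dist n r : ℕ):ℝ))⁻¹
                ≤ 16 * x^(σ+ε/2) * (2 * x^(ε/4) * (((Nat.dist n r : ℕ):ℝ)^(1+ε/4))⁻¹) := by
                  apply mul_le_mul_of_nonneg_left hkinv (by positivity)
              _ = 32 * (x^(σ+ε/2) * x^(ε/4)) * (((Nat.dist n r : ℕ):ℝ)^(1+ε/4))⁻¹ := by ring
              _ = 32 * x^(σ+ε/2+ε/4) * (((Nat.dist n r : ℕ):ℝ)^(1+ε/4))⁻¹ := by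
                  rw [← Real.rpow_add hx0]
              _ ≤ 48 * x^(σ+ε) * (((Nat.dist n r : ℕ):ℝ)^(1+ε/4))⁻¹ := by
                  have h9 : x^(σ+ε/2+ε/4) ≤ x^(σ+ε) :=
                    Real.rpow_le_rpow_of_exponent_le hx.le (by linarith)
                  have h10 : (0:ℝ) ≤ (((Nat.dist n r : ℕ):ℝ)^(1+ε/4))⁻¹ := by positivity
                  calc 32 * x^(σ+ε/2+ε/4) * (((Nat.dist n r : ℕ):ℝ)^(1+ε/4))⁻¹
                      ≤ 32 * x^(σ+ε) * (((Nat.dist n r : ℕ):ℝ)^(1+ε/4))⁻¹ := by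
                        apply mul_le_mul_of_nonneg_right _ h10
                        exact mul_le_mul_of_nonneg_left h9 (by norm_num)
                    _ ≤ 48 * x^(σ+ε) * (((Nat.dist n r : ℕ):ℝ)^(1+ε/4))⁻¹ := by
                        apply mul_le_mul_of_nonneg_right _ h10
                        exact mul_le_mul_of_nonneg_right (by norm_num) (Real.rpow_nonneg hx0.le _)
          linarith [le_trans hchain hfinal]
  -- summability of majorant
  have hg2base : Summable (fun n : ℕ => ((Nat.dist n r : ℝ)^(1+ε/4))⁻¹) := by
    rw [← summable_nat_add_iff r]
    have h : ∀ n : ℕ, Nat.dist (n + r) r = n := by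
      intro n; simp [Nat.dist]
    simp only [h]
    exact hZ₂sum
  have hg1 : Summable (fun n : ℕ => 2 * x^(σ+ε) * (((n:ℕ):ℝ)^(1+ε/2))⁻¹) := hZ₁sum.mul_left _
  have hg2 : Summable (fun n : ℕ => 48 * x^(σ+ε) * ((Nat.dist n r : ℝ)^(1+ε/4))⁻¹) :=
    hg2base.mul_left _
  have hg3 : Summable (fun n : ℕ =>
      (if n = r then 8 * x^(σ+ε/2) * min (T/x) (distNearestInt x)⁻¹ else 0)) :=
    summable_of_ne_finset_zero (s := {r}) (fun n hn => if_neg (by simpa using hn))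
  have hgsum : Summable (fun n : ℕ => 2 * x^(σ+ε) * (((n:ℕ):ℝ)^(1+ε/2))⁻¹
          + 48 * x^(σ+ε) * ((Nat.dist n r : ℝ)^(1+ε/4))⁻¹
          + (if n = r then 8 * x^(σ+ε/2) * min (T/x) (distNearestInt x)⁻¹ else 0)) :=
    (hg1.add hg2).add hg3
  have hM0 : 0 ≤ min (T/x) (distNearestInt x)⁻¹ := le_min (by positivity) (by positivity)
  have hgnonneg : ∀ n : ℕ, 0 ≤ 2 * x^(σ+ε) * (((n:ℕ):ℝ)^(1+ε/2))⁻¹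
          + 48 * x^(σ+ε) * ((Nat.dist n r : ℝ)^(1+ε/4))⁻¹
          + (if n = r then 8 * x^(σ+ε/2) * min (T/x) (distNearestInt x)⁻¹ else 0) := by
    intro n
    have h3 : (0:ℝ) ≤ (if n = r then 8 * x^(σ+ε/2) * min (T/x) (distNearestInt x)⁻¹ else 0) := by
      split
      · positivity
      · exact le_rfl
    positivity
  have hF0 : ∀ n : {n : ℕ // 1 ≤ n},
      0 ≤ ‖Λ' n‖ * (x / ((n:ℕ):ℝ)) ^ (σ + ε) * min T (|Real.log (x / ((n:ℕ):ℝ))|⁻¹) := by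
    intro n
    have h1 : (0:ℝ) ≤ min T (|Real.log (x / ((n:ℕ):ℝ))|⁻¹) := le_min (by linarith) (by positivity)
    positivity
  have hFsumm : Summable (fun n : {n : ℕ // 1 ≤ n} =>
      ‖Λ' n‖ * (x / ((n:ℕ):ℝ)) ^ (σ + ε) * min T (|Real.log (x / ((n:ℕ):ℝ))|⁻¹)) := by
    apply Summable.of_nonneg_of_le hF0 (fun n => key n.1 n.2)
    exact hgsum.comp_injective Subtype.val_injective
  refine ⟨hFsumm, ?_⟩
  have step1 : (∑' n : {n : ℕ // 1 ≤ n},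
      ‖Λ' n‖ * (x / ((n:ℕ):ℝ)) ^ (σ + ε) * min T (|Real.log (x / ((n:ℕ):ℝ))|⁻¹))
      ≤ ∑' n : ℕ, (2 * x^(σ+ε) * (((n:ℕ):ℝ)^(1+ε/2))⁻¹
          + 48 * x^(σ+ε) * ((Nat.dist n r : ℝ)^(1+ε/4))⁻¹
          + (if n = r then 8 * x^(σ+ε/2) * min (T/x) (distNearestInt x)⁻¹ else 0)) :=
    Summable.tsum_le_tsum_of_inj (Subtype.val) Subtype.val_injective (fun c _ => hgnonneg c)
      (fun n => key n.1 n.2) hFsumm hgsum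
  -- compute/bound tsum of majorant
  have hsplit : (∑' n : ℕ, (2 * x^(σ+ε) * (((n:ℕ):ℝ)^(1+ε/2))⁻¹
          + 48 * x^(σ+ε) * ((Nat.dist n r : ℝ)^(1+ε/4))⁻¹
          + (if n = r then 8 * x^(σ+ε/2) * min (T/x) (distNearestInt x)⁻¹ else 0)))
      = 2 * x^(σ+ε) * Z₁ + 48 * x^(σ+ε) * (∑' n : ℕ, ((Nat.dist n r : ℝ)^(1+ε/4))⁻¹)
        + 8 * x^(σ+ε/2) * min (T/x) (distNearestInt x)⁻¹ := by
    rw [Summable.tsum_add (hg1.add hg2) hg3, Summable.tsum_add hg1 hg2, tsum_mul_left, tsum_mul_left, tsum_ite_eq]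
  have hW : (∑' n : ℕ, ((Nat.dist n r : ℝ)^(1+ε/4))⁻¹) ≤ 2 * Z₂ := by
    have hsplit2 := Summable.sum_add_tsum_nat_add
      (f := fun n : ℕ => ((Nat.dist n r : ℝ)^(1+ε/4))⁻¹) r hg2base
    have hdistadd : ∀ n : ℕ, Nat.dist (n + r) r = n := by
      intro n; simp [Nat.dist]
    have htail : (∑' n : ℕ, ((Nat.dist (n + r) r : ℝ)^(1+ε/4))⁻¹) = Z₂ := by
      simp only [hdistadd]
      exact hZ₂def.symm
    have hcongr : (∑ n ∈ Finset.range r, ((Nat.dist n r : ℝ)^(1+ε/4))⁻¹)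
        = ∑ n ∈ Finset.range r, ((((r - n : ℕ)):ℝ)^(1+ε/4))⁻¹ := by
      apply Finset.sum_congr rfl
      intro i hi
      rw [Nat.dist_eq_sub_of_le (le_of_lt (Finset.mem_range.mp hi))]
    have hreflect : (∑ n ∈ Finset.range r, ((((r - n : ℕ)):ℝ)^(1+ε/4))⁻¹)
        = ∑ n ∈ Finset.range r, ((((n + 1 : ℕ)):ℝ)^(1+ε/4))⁻¹ := by
      have h := Finset.sum_range_reflect (fun j => ((((j + 1 : ℕ)):ℝ)^(1+ε/4))⁻¹) r
      rw [← h]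
      apply Finset.sum_congr rfl
      intro i hi
      have hiq : r - i = r - 1 - i + 1 := by
        have := Finset.mem_range.mp hi
        omega
      rw [hiq]
    have hshift : Summable (fun n : ℕ => ((((n + 1 : ℕ)):ℝ)^(1+ε/4))⁻¹) :=
      (summable_nat_add_iff 1).mpr hZ₂sum
    have hle := Summable.sum_le_tsum (Finset.range r) (fun i _ => by positivity) hshift
    have hZeq : (∑' n : ℕ, ((((n + 1 : ℕ)):ℝ)^(1+ε/4))⁻¹) = Z₂ := by
      have h0 := Summable.tsum_eq_zero_add hZ₂sum
      have hzero : ((((0:ℕ)):ℝ)^(1+ε/4))⁻¹ = (0:ℝ) := by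
        rw [Nat.cast_zero, Real.zero_rpow (ne_of_gt (by linarith : (0:ℝ) < 1+ε/4))]
        exact inv_zero
      rw [hZ₂def, h0, hzero, zero_add]
    have hhead : (∑ n ∈ Finset.range r, ((Nat.dist n r : ℝ)^(1+ε/4))⁻¹) ≤ Z₂ := by
      rw [hcongr, hreflect]
      exact le_trans hle (le_of_eq hZeq)
    have := hsplit2
    rw [htail] at this
    linarith [hhead, this.symm.le, this.le]
  -- finish
  rw [hsplit] at step1
  have hxs0 : (0:ℝ) ≤ x^(σ+ε) := Real.rpow_nonneg hx0.le _
  have hWterm : 48 * x^(σ+ε) * (∑' n : ℕ, ((Nat.dist n r : ℝ)^(1+ε/4))⁻¹)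
      ≤ 96 * Z₂ * x^(σ+ε) := by
    calc 48 * x^(σ+ε) * (∑' n : ℕ, ((Nat.dist n r : ℝ)^(1+ε/4))⁻¹)
        ≤ 48 * x^(σ+ε) * (2*Z₂) := by
          apply mul_le_mul_of_nonneg_left hW (by positivity)
      _ = 96 * Z₂ * x^(σ+ε) := by ring
  have hm'0 : 0 ≤ x^(σ+ε/2) * min (T/x) (distNearestInt x)⁻¹ :=
    mul_nonneg (Real.rpow_nonneg hx0.le _) hM0
  have hprod1 : 0 ≤ Z₁ * (x^(σ+ε/2) * min (T/x) (distNearestInt x)⁻¹) := mul_nonneg hZ₁0 hm'0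
  have hprod2 : 0 ≤ Z₂ * (x^(σ+ε/2) * min (T/x) (distNearestInt x)⁻¹) := mul_nonneg hZ₂0 hm'0
  have hexpand : (2*Z₁ + 96*Z₂ + 8) * (x^(σ+ε) + x^(σ+ε/2) * min (T/x) (distNearestInt x)⁻¹)
      = 2 * x^(σ+ε) * Z₁ + 96 * Z₂ * x^(σ+ε) + 8 * x^(σ+ε/2) * min (T/x) (distNearestInt x)⁻¹
        + 8 * x^(σ+ε)
        + 2 * (Z₁ * (x^(σ+ε/2) * min (T/x) (distNearestInt x)⁻¹))
        + 96 * (Z₂ * (x^(σ+ε/2) * min (T/x) (distNearestInt x)⁻¹)) := by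
    ring
  rw [hexpand]
  linarith [step1, hWterm]
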